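/- Let T be a linear operator on F_q^n and λ=(λ_1,…,λ_ℓ) a partition of n. Then |H(k_λ,T)| = [λ]_q! · fl_λ(T), where fl_λ(T) is the number of λ-flags of T-invariant subspaces and k_λ is the complete-type Hessenberg function associated to λ. -/
import Mathlib


/-- The q-analog `[m]_q = 1 + q + ⋯ + q^(m-1)`. -/
def qInt (q m : ℕ) : ℕ := ∑ j ∈ Finset.range m, q ^ j

/-- The q-factorial `[k]_q! = ∏_{j=1}^k [j]_q`. -/
def qFact (q k : ℕ) : ℕ := ∏ j ∈ Finset.range k, qInt q (j + 1)

/-- A complete flag `0 = V 0 ⊆ V 1 ⊆ ⋯ ⊆ V n = F^n` with `dim (V i) = i`. -/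
def IsFlag (F : Type) [Field F] (n : ℕ) (V : ℕ → Submodule F (Fin n → F)) : Prop :=
  V 0 = ⊥ ∧ V n = ⊤ ∧ (∀ i, V i ≤ V (i + 1)) ∧ ∀ i, i ≤ n → Module.finrank F ↥(V i) = i

/-- A Hessenberg function on `[n]` (with values queried at `1,…,n`). -/
def IsHess (n : ℕ) (m : ℕ → ℕ) : Prop :=
  (∀ i, 1 ≤ i → i ≤ n → i ≤ m i ∧ m i ≤ n) ∧
  ∀ i j, 1 ≤ i → i ≤ j → j ≤ n → m i ≤ m j

/-- The set of `F_q`-points of the Hessenberg variety `H(m, T)`. -/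
def Hess (F : Type) [Field F] (n : ℕ) (m : ℕ → ℕ) (T : Module.End F (Fin n → F)) :
    Set (ℕ → Submodule F (Fin n → F)) :=
  {V | IsFlag F n V ∧ ∀ i, 1 ≤ i → i ≤ n → (V i).map T ≤ V (m i)}

/-- Partial sums `α t = λ 1 + ⋯ + λ t` of a sequence `λ : Fin ℓ → ℕ`. -/
def psum (ℓ : ℕ) (lam : Fin ℓ → ℕ) (t : ℕ) : ℕ :=
  ∑ j ∈ Finset.range t, if h : j < ℓ then lam ⟨j, h⟩ else 0

/-- The complete-type Hessenberg function `k_λ`, taking the value `α i` on each `j`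
with `α (i-1) < j ≤ α i`. -/
noncomputable def kLam (ℓ : ℕ) (lam : Fin ℓ → ℕ) : ℕ → ℕ :=
  fun j => psum ℓ lam (sInf {t | j ≤ psum ℓ lam t})

/-- A `λ`-flag of `T`-invariant subspaces:
`0 = W 0 ⊆ W 1 ⊆ ⋯ ⊆ W ℓ = F^n` with `dim (W i) = λ 1 + ⋯ + λ i`
(equivalently `dim (W i / W (i-1)) = λ i`) and `T (W i) ⊆ W i`. -/
def IsInvLamFlag (F : Type) [Field F] (n : ℕ) (ℓ : ℕ) (lam : Fin ℓ → ℕ)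
    (T : Module.End F (Fin n → F)) (W : Fin (ℓ + 1) → Submodule F (Fin n → F)) : Prop :=
  W 0 = ⊥ ∧ W (Fin.last ℓ) = ⊤ ∧ Monotone W ∧
  (∀ i : Fin (ℓ + 1), Module.finrank F ↥(W i) = psum ℓ lam i) ∧
  ∀ i, (W i).map T ≤ W i


open Module

lemma qFact_succ (q m : ℕ) : qFact q (m+1) = qFact q m * qInt q (m+1) :=
  Finset.prod_range_succ _ _

lemma qInt_mul_pred (q d : ℕ) (hq : 1 ≤ q) : qInt q d * (q - 1) = q ^ d - 1 := by
  induction d with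
  | zero => simp [qInt]
  | succ d ih =>
    have h1 : (1:ℕ) ≤ q ^ d := Nat.one_le_pow _ _ hq
    have h2 : q ^ d ≤ q ^ (d+1) := Nat.pow_le_pow_right hq (by omega)
    have h3 : q ^ d * (q - 1) = q ^ (d+1) - q ^ d := by
      rw [Nat.mul_sub, Nat.mul_one, ← pow_succ]
    have : qInt q (d+1) = qInt q d + q ^ d := Finset.sum_range_succ _ _
    rw [this, Nat.add_mul, ih, h3]
    omega

section Counting

variable {F : Type} [Field F] [Fintype F] {M : Type} [AddCommGroup M] [Module F M] [Fintype M]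

noncomputable local instance : Finite (Submodule F M) :=
  Finite.of_injective (fun p => (p : Set M)) SetLike.coe_injective

local instance : Module.Finite F M := Module.Finite.of_finite

lemma card_submodule (p : Submodule F M) :
    Nat.card p = Fintype.card F ^ finrank F p := by
  classical
  rw [Nat.card_eq_fintype_card]
  exact card_eq_pow_finrank

lemma card_diff (A B : Submodule F M) (hAB : A ≤ B) :
    Nat.card {v : M // v ∈ B ∧ v ∉ A} =
      Fintype.card F ^ finrank F B - Fintype.card F ^ finrank F A := by
  classical
  have e1 : {v : M // v ∈ B ∧ v ∉ A} ≃ {x : B // ¬ ((x : M) ∈ A)} :=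
    { toFun := fun v => ⟨⟨v.1, v.2.1⟩, v.2.2⟩
      invFun := fun x => ⟨x.1.1, x.1.2, x.2⟩
      left_inv := fun v => rfl
      right_inv := fun x => rfl }
  have e2 : {x : B // (x : M) ∈ A} ≃ A :=
    (Submodule.comapSubtypeEquivOfLe hAB).toEquiv
  rw [Nat.card_congr e1, Nat.card_eq_fintype_card,
    Fintype.card_subtype_compl (fun x : B => (x : M) ∈ A)]
  have hB : Fintype.card B = Fintype.card F ^ finrank F B := card_eq_pow_finrank
  have hA2 : Fintype.card {x : B // (x : M) ∈ A} = Fintype.card F ^ finrank F A := by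
    rw [Fintype.card_congr e2]
    exact card_eq_pow_finrank
  rw [hB, hA2]

lemma card_oneStep (A B : Submodule F M) (hAB : A ≤ B) (d : ℕ)
    (hd : finrank F B = finrank F A + d) :
    Nat.card {A' : Submodule F M // A ≤ A' ∧ A' ≤ B ∧ finrank F A' = finrank F A + 1} =
      qInt (Fintype.card F) d := by
  classical
  set q := Fintype.card F with hq
  have hq2 : 2 ≤ q := Fintype.one_lt_card
  set rA := finrank F A with hrA
  set S := {A' : Submodule F M // A ≤ A' ∧ A' ≤ B ∧ finrank F A' = rA + 1} with hS
  set X := {v : M // v ∈ B ∧ v ∉ A} with hX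
  -- the key finrank computation
  have hsup : ∀ v : M, v ∈ B → v ∉ A → (A ≤ A ⊔ Submodule.span F {v} ∧
      A ⊔ Submodule.span F {v} ≤ B ∧ finrank F ↥(A ⊔ Submodule.span F {v}) = rA + 1) := by
    intro v hvB hvA
    have hv0 : v ≠ 0 := fun h => hvA (h ▸ A.zero_mem)
    have hle : A ≤ A ⊔ Submodule.span F {v} := le_sup_left
    have hleB : A ⊔ Submodule.span F {v} ≤ B :=
      sup_le hAB ((Submodule.span_le).2 (Set.singleton_subset_iff.2 hvB))
    have hlt : A < A ⊔ Submodule.span F {v} := by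
      refine lt_of_le_of_ne hle (fun h => hvA ?_)
      have : v ∈ A ⊔ Submodule.span F {v} :=
        Submodule.mem_sup_right (Submodule.mem_span_singleton_self v)
      rwa [← h] at this
    have h1 : rA < finrank F ↥(A ⊔ Submodule.span F {v}) :=
      Submodule.finrank_lt_finrank_of_lt hlt
    have h2 : finrank F ↥(A ⊔ Submodule.span F {v}) ≤ rA + 1 := by
      have := Submodule.finrank_sup_add_finrank_inf_eq A (Submodule.span F {v})
      have hsp : finrank F ↥(Submodule.span F {v}) = 1 := finrank_span_singleton hv0
      omega
    exact ⟨hle, hleB, by omega⟩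
  -- the fiber map
  let f : X → S := fun v => ⟨A ⊔ Submodule.span F {v.1},
    (hsup v.1 v.2.1 v.2.2).1, (hsup v.1 v.2.1 v.2.2).2.1, (hsup v.1 v.2.1 v.2.2).2.2⟩
  -- each fiber is the set difference A' \ A
  have hfiber : ∀ s : S, Nat.card {v : X // f v = s} = q ^ rA * (q - 1) := by
    intro s
    obtain ⟨A', hAA', hA'B, hrk⟩ := s
    have e : {v : X // f v = ⟨A', hAA', hA'B, hrk⟩} ≃ {w : M // w ∈ A' ∧ w ∉ A} :=
      { toFun := fun v => ⟨v.1.1, by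
          have h := congrArg (fun s : S => s.1) v.2
          simp only at h
          exact ⟨h.le (Submodule.mem_sup_right (Submodule.mem_span_singleton_self v.1.1)),
            v.1.2.2⟩⟩
        invFun := fun w => ⟨⟨w.1, hA'B w.2.1, w.2.2⟩, by
          apply Subtype.ext
          have h := hsup w.1 (hA'B w.2.1) w.2.2
          refine Submodule.eq_of_le_of_finrank_le (sup_le hAA' ?_) ?_
          · exact (Submodule.span_le).2 (Set.singleton_subset_iff.2 w.2.1)
          · rw [hrk, h.2.2]⟩
        left_inv := fun v => by apply Subtype.ext; apply Subtype.ext; rfl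
        right_inv := fun w => rfl }
    rw [Nat.card_congr e, card_diff A A' hAA', hrk, pow_succ, Nat.mul_sub, Nat.mul_one]
  -- total count
  have hX2 : Nat.card X = q ^ (rA + d) - q ^ rA := by
    rw [hX, card_diff A B hAB, hd]
  have hsig : Nat.card X = Nat.card S * (q ^ rA * (q - 1)) := by
    letI : Fintype S := Fintype.ofFinite S
    letI : ∀ s : S, Fintype {v : X // f v = s} := fun s => Fintype.ofFinite _
    rw [← Nat.card_congr (Equiv.sigmaFiberEquiv f), Nat.card_eq_fintype_card,
      Fintype.card_sigma]
    rw [Nat.card_eq_fintype_card]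
    rw [Finset.sum_congr rfl (fun s _ => ?_), Finset.sum_const, Finset.card_univ, smul_eq_mul]
    rw [← Nat.card_eq_fintype_card, hfiber s]
  have hkey : Nat.card S * (q ^ rA * (q - 1)) = qInt q d * (q ^ rA * (q - 1)) := by
    rw [← hsig, hX2]
    have : qInt q d * (q ^ rA * (q - 1)) = q ^ rA * (qInt q d * (q - 1)) := by ring
    rw [this, qInt_mul_pred q d (by omega), Nat.mul_sub, Nat.mul_one, ← pow_add]
  have hpos : 0 < q ^ rA * (q - 1) := by
    have := Nat.one_le_pow rA q (by omega)
    have : 0 < q - 1 := by omega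
    positivity
  exact Nat.eq_of_mul_eq_mul_right hpos hkey

end Counting

section Chains

variable {F : Type} [Field F] [Fintype F] {M : Type} [AddCommGroup M] [Module F M] [Fintype M]

noncomputable local instance : Finite (Submodule F M) :=
  Finite.of_injective (fun p => (p : Set M)) SetLike.coe_injective

local instance : Module.Finite F M := Module.Finite.of_finite

/-- Chains of subspaces from `A` to `B` with one-dimensional steps. -/
abbrev ChainT (A B : Submodule F M) (m : ℕ) : Type :=
  {c : Fin (m + 1) → Submodule F M // c 0 = A ∧ c (Fin.last m) = B ∧ Monotone c ∧
    ∀ k : Fin (m + 1), finrank F (c k) = finrank F A + k.val}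

private lemma sig_ext {A : Type*} {ι : Type*} {γ : ι → Type*} {Q : A → (i : ι) → γ i → Prop}
    (x y : Σ a : A, (i : ι) → {f : γ i // Q a i f}) (h1 : x.1 = y.1)
    (h2 : ∀ i, (x.2 i).1 = (y.2 i).1) : x = y := by
  obtain ⟨a, g⟩ := x
  obtain ⟨b, g'⟩ := y
  dsimp at h1 h2
  subst h1
  exact congrArg (Sigma.mk a) (funext fun i => Subtype.ext (h2 i))

private lemma sig_ext2 {A : Type*} {γ : Type*} {Q : A → γ → Prop}
    (x y : Σ a : A, {f : γ // Q a f}) (h1 : x.1 = y.1) (h2 : x.2.1 = y.2.1) : x = y := by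
  obtain ⟨a, g⟩ := x
  obtain ⟨b, g'⟩ := y
  dsimp at h1 h2
  subst h1
  exact congrArg (Sigma.mk a) (Subtype.ext h2)

private lemma natCard_sigma {ι : Type*} [Finite ι] (f : ι → Type*) [∀ i, Finite (f i)] :
    Nat.card ((i : ι) × f i) = ∑ᶠ i, Nat.card (f i) := by
  letI : Fintype ι := Fintype.ofFinite ι
  letI : ∀ i, Fintype (f i) := fun i => Fintype.ofFinite _
  rw [Nat.card_eq_fintype_card, Fintype.card_sigma, finsum_eq_sum_of_fintype]
  simp [Nat.card_eq_fintype_card]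

lemma card_chain (m : ℕ) (A B : Submodule F M) (hAB : A ≤ B)
    (hd : finrank F B = finrank F A + m) :
    Nat.card (ChainT A B m) = qFact (Fintype.card F) m := by
  classical
  induction m generalizing A with
  | zero =>
    have hBA : A = B := Submodule.eq_of_le_of_finrank_le hAB (by omega)
    subst hBA
    have : Subsingleton (ChainT A A 0) := by
      constructor
      intro c c'
      apply Subtype.ext
      funext k
      have hk : k = 0 := Fin.ext (by omega)
      rw [hk, c.2.1, c'.2.1]
    have : Nonempty (ChainT A A 0) :=
      ⟨⟨fun _ => A, rfl, rfl, monotone_const, fun k => by simp [Fin.val_eq_zero]⟩⟩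
    rw [Nat.card_unique]
    simp [qFact]
  | succ m ih =>
    -- the set of one-step extensions of `A` inside `B`
    set S := {A' : Submodule F M // A ≤ A' ∧ A' ≤ B ∧ finrank F A' = finrank F A + 1} with hS
    -- the bijection with pairs (one step, rest of chain)
    let f : ChainT A B (m + 1) → Σ s : S, ChainT s.1 B m := fun c =>
      ⟨⟨c.1 1, by
          rcases c with ⟨c, hc0, hcl, hmono, hrk⟩
          refine ⟨hc0 ▸ hmono (by simp [Fin.le_def]), hcl ▸ hmono (by simp [Fin.le_def]), ?_⟩
          have := hrk 1
          simpa using this⟩,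
        ⟨fun k => c.1 k.succ, by simp [c.2.1], by
            show c.1 (Fin.last m).succ = B
            rw [Fin.succ_last]; exact c.2.2.1,
          fun a b hab => c.2.2.2.1 (Fin.succ_le_succ_iff.2 hab), fun k => by
            have h1 := c.2.2.2.2 k.succ
            have h2 := c.2.2.2.2 1
            simp only [Fin.val_succ] at h1 ⊢
            simp only [Fin.val_one] at h2  -- careful
            omega⟩⟩
    have hinj : Function.Injective f := by
      intro c c' h
      have h1 : c.1 1 = c'.1 1 := congrArg (fun x : Σ s : S, ChainT s.1 B m => x.1.1) h
      have h2 : (fun k : Fin (m+1) => c.1 k.succ) = (fun k => c'.1 k.succ) :=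
        congrArg (fun x : Σ s : S, ChainT s.1 B m => x.2.1) h
      apply Subtype.ext
      funext k
      induction k using Fin.cases with
      | zero => rw [c.2.1, c'.2.1]
      | succ j => exact congrFun h2 j
    have hsurj : Function.Surjective f := by
      rintro ⟨⟨A', hAA', hA'B, hrkA'⟩, c⟩
      refine ⟨⟨Fin.cons A c.1, Fin.cons_zero _ _, ?_, ?_, ?_⟩, ?_⟩
      · rw [show (Fin.last (m+1)) = (Fin.last m).succ from rfl, Fin.cons_succ]
        exact c.2.2.1
      · rw [Fin.monotone_iff_le_succ]
        intro i
        induction i using Fin.cases with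
        | zero =>
          have h1 : (Fin.cons A c.1 : Fin (m+2) → Submodule F M) ((0 : Fin (m+1)).castSucc)
              = A := by rw [Fin.castSucc_zero, Fin.cons_zero]
          have h2 : (Fin.cons A c.1 : Fin (m+2) → Submodule F M) ((0 : Fin (m+1)).succ)
              = c.1 0 := Fin.cons_succ _ _ _
          rw [h1, h2, c.2.1]
          exact hAA'
        | succ j =>
          rw [← Fin.succ_castSucc, Fin.cons_succ, Fin.cons_succ]
          exact c.2.2.2.1 (Fin.castSucc_le_succ j)
      · intro k
        induction k using Fin.cases with
        | zero =>
          show finrank F ↥((Fin.cons A c.1 : Fin (m+2) → Submodule F M) 0)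
              = finrank F ↥A + ((0 : Fin (m+2)).val)
          rw [Fin.cons_zero]
          simp
        | succ j =>
          rw [Fin.cons_succ]
          have h : finrank F ↥(c.1 j) = finrank F ↥A' + j.val := c.2.2.2.2 j
          simp only [Fin.val_succ]
          omega
      · refine sig_ext2 _ _ (Subtype.ext ?_) ?_ <;> simp only [f]
        · rw [show (1 : Fin (m+2)) = (0 : Fin (m+1)).succ from rfl, Fin.cons_succ]
          exact c.2.1
        · funext k
          exact Fin.cons_succ _ _ _
    have hcardeq : Nat.card (ChainT A B (m+1)) = Nat.card (Σ s : S, ChainT s.1 B m) :=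
      Nat.card_congr (Equiv.ofBijective f ⟨hinj, hsurj⟩)
    letI : Fintype S := Fintype.ofFinite S
    have hstep : ∀ s : S, Nat.card (ChainT s.1 B m) = qFact (Fintype.card F) m :=
      fun s => ih s.1 s.2.2.1 (by omega)
    rw [hcardeq, natCard_sigma, finsum_congr hstep, finsum_eq_sum_of_fintype,
      Finset.sum_const, Finset.card_univ, ← Nat.card_eq_fintype_card,
      card_oneStep A B hAB (m+1) hd, smul_eq_mul, qFact_succ, mul_comm]

end Chains

section Psum

variable {ℓ : ℕ} (lam : Fin ℓ → ℕ)

lemma psum_zero : psum ℓ lam 0 = 0 := by simp [psum]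

lemma psum_succ {t : ℕ} (ht : t < ℓ) :
    psum ℓ lam (t + 1) = psum ℓ lam t + lam ⟨t, ht⟩ := by
  rw [psum, Finset.sum_range_succ, dif_pos ht]
  rfl

lemma psum_mono : Monotone (psum ℓ lam) := by
  apply monotone_nat_of_le_succ
  intro t
  rw [psum, psum, Finset.sum_range_succ]
  exact Nat.le_add_right _ _

lemma psum_ell : psum ℓ lam ℓ = ∑ i, lam i := by
  rw [psum, Finset.sum_range]
  refine Finset.sum_congr rfl fun i _ => ?_
  rw [dif_pos i.2]

lemma psum_of_ge {t : ℕ} (ht : ℓ ≤ t) : psum ℓ lam t = psum ℓ lam ℓ := by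
  rw [psum, psum]
  refine (Finset.sum_subset (Finset.range_subset_range.2 ht) fun x _ hx => ?_).symm
  rw [dif_neg (by simpa using hx)]

lemma psum_lt (hpos : ∀ i, 0 < lam i) {s t : ℕ} (hst : s < t) (ht : t ≤ ℓ) :
    psum ℓ lam s < psum ℓ lam t := by
  have hs : s < ℓ := lt_of_lt_of_le hst ht
  have h1 := psum_succ lam hs
  have h2 := psum_mono lam (show s + 1 ≤ t from hst)
  have := hpos ⟨s, hs⟩
  omega

end Psum

/-- `|H(k_λ, T)| = [λ]_q! ⬝ fl_λ(T)`, where `fl_λ(T)` is the number of `λ`-flags of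
`T`-invariant subspaces. -/
theorem stmt10 (F : Type) [Field F] [Fintype F] (n : ℕ)
    (ℓ : ℕ) (lam : Fin ℓ → ℕ) (hpos : ∀ i, 0 < lam i) (hanti : Antitone lam)
    (hsum : ∑ i, lam i = n)
    (T : Module.End F (Fin n → F)) :
    (Hess F n (kLam ℓ lam) T).ncard =
      (∏ i, qFact (Fintype.card F) (lam i)) *
        {W : Fin (ℓ + 1) → Submodule F (Fin n → F) | IsInvLamFlag F n ℓ lam T W}.ncard := by
  classical
  rcases Nat.eq_zero_or_pos ℓ with hl0 | hl
  · -- degenerate case ℓ = 0, n = 0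
    subst hl0
    have hn : n = 0 := by simpa using hsum.symm
    subst hn
    haveI : Subsingleton (Fin 0 → F) := ⟨fun a b => funext fun i => i.elim0⟩
    have hsub : ∀ p : Submodule F (Fin 0 → F), p = ⊥ := fun p =>
      Submodule.eq_bot_of_subsingleton
    haveI hssub : Subsingleton (Submodule F (Fin 0 → F)) :=
      ⟨fun p q => (hsub p).trans (hsub q).symm⟩
    have h1 : Hess F 0 (kLam 0 lam) T = Set.univ := by
      ext V
      simp only [Hess, Set.mem_setOf_eq, Set.mem_univ, iff_true]
      refine ⟨⟨Subsingleton.elim _ _, Subsingleton.elim _ _,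
        fun i => le_of_eq (Subsingleton.elim _ _), fun i hi => ?_⟩,
        fun i h1 h2 => by omega⟩
      have hi0 : i = 0 := by omega
      subst hi0
      rw [hsub (V 0)]
      exact finrank_bot F _
    have h2 : {W : Fin (0 + 1) → Submodule F (Fin 0 → F) | IsInvLamFlag F 0 0 lam T W} =
        Set.univ := by
      ext W
      simp only [IsInvLamFlag, Set.mem_setOf_eq, Set.mem_univ, iff_true]
      refine ⟨Subsingleton.elim _ _, Subsingleton.elim _ _,
        fun a b h => le_of_eq (Subsingleton.elim _ _), fun i => ?_,
        fun i => le_of_eq (Subsingleton.elim _ _)⟩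
      rw [hsub (W i), show psum 0 lam i.val = 0 from by simp [psum]]
      exact finrank_bot F _
    rw [h1, h2, Set.ncard_univ, Set.ncard_univ, Nat.card_unique, Nat.card_unique]
    simp
  -- main case
  have hn0 : 0 < n := by
    have hp := hpos ⟨0, hl⟩
    have h1 : psum ℓ lam 1 ≤ psum ℓ lam ℓ := psum_mono lam hl
    rw [psum_ell, hsum] at h1
    have h2 := psum_succ lam hl
    norm_num at h2
    have h3 := psum_zero lam
    omega
  haveI : Finite (Submodule F (Fin n → F)) :=
    Finite.of_injective (fun p => (p : Set (Fin n → F))) SetLike.coe_injective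
  set α : ℕ → ℕ := psum ℓ lam with hαdef
  have hα0 : α 0 = 0 := psum_zero lam
  have hαl : α ℓ = n := by rw [hαdef, psum_ell, hsum]
  have hαmono : Monotone α := psum_mono lam
  have hαsucc : ∀ i : Fin ℓ, α (i.val + 1) = α i.val + lam i := by
    intro i
    have h := psum_succ lam i.2
    rw [show (⟨i.val, i.2⟩ : Fin ℓ) = i from rfl] at h
    exact h
  have hαle : ∀ t, t ≤ ℓ → α t ≤ n := fun t ht => hαl ▸ hαmono ht
  have hαlt : ∀ {s t : ℕ}, s < t → t ≤ ℓ → α s < α t := fun hst ht => psum_lt lam hpos hst ht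
  set idx : ℕ → ℕ := fun j => sInf {t | j ≤ α t} with hidxdef
  have hidx_mem : ∀ j, j ≤ n → j ≤ α (idx j) := fun j hj =>
    Nat.sInf_mem (⟨ℓ, show j ≤ α ℓ by rw [hαl]; exact hj⟩ : {t | j ≤ α t}.Nonempty)
  have hidx_le : ∀ j, j ≤ n → idx j ≤ ℓ :=
    fun j hj => Nat.sInf_le (show j ≤ α ℓ by rw [hαl]; exact hj)
  have hidx_lt : ∀ j s, s < idx j → α s < j := by
    intro j s hs
    have h := Nat.notMem_of_lt_sInf (hs : s < sInf {t | j ≤ α t})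
    simpa [Set.mem_setOf_eq, not_le] using h
  have hidx_psum : ∀ t, t ≤ ℓ → idx (α t) = t := by
    intro t ht
    refine le_antisymm (Nat.sInf_le (le_refl _ : α t ≤ α t)) ?_
    by_contra h
    push_neg at h
    have h1 := hidx_mem (α t) (hαle t ht)
    have h2 := hαlt (show idx (α t) < t from h) ht
    omega
  have hklam : ∀ j, kLam ℓ lam j = α (idx j) := fun j => rfl
  -- block decomposition of positions
  have exists_block' : ∀ j, j < n → ∃ i : Fin ℓ, ∃ k : ℕ, k < lam i ∧ j = α i.val + k := by
    intro j hj
    have hj1 : j + 1 ≤ n := hj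
    have htl : idx (j + 1) ≤ ℓ := hidx_le _ hj1
    have ht1 : 1 ≤ idx (j + 1) := by
      by_contra h
      have h2 := hidx_mem (j + 1) hj1
      have h3 : idx (j + 1) = 0 := by omega
      rw [h3, hα0] at h2
      omega
    obtain ⟨s, hsl, hs⟩ : ∃ s, ∃ hsl : s < ℓ, idx (j + 1) = s + 1 :=
      ⟨idx (j + 1) - 1, by omega, by omega⟩
    have hlow : α s < j + 1 := hidx_lt (j + 1) s (by omega)
    have hup : j + 1 ≤ α (s + 1) := by rw [← hs]; exact hidx_mem _ hj1
    have hstep := hαsucc ⟨s, hsl⟩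
    refine ⟨⟨s, hsl⟩, j - α s, ?_, ?_⟩
    · simp only [Fin.val_mk] at *
      omega
    · simp only [Fin.val_mk] at *
      omega
  have exists_block : ∀ j, j ≤ n → ∃ i : Fin ℓ, ∃ k : ℕ, k ≤ lam i ∧ j = α i.val + k := by
    intro j hj
    rcases lt_or_eq_of_le hj with h | h
    · obtain ⟨i, k, hk, hjk⟩ := exists_block' j h
      exact ⟨i, k, le_of_lt hk, hjk⟩
    · subst h
      obtain ⟨s, hsl, hs⟩ : ∃ s, ∃ hsl : s < ℓ, ℓ = s + 1 := ⟨ℓ - 1, by omega, by omega⟩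
      refine ⟨⟨s, hsl⟩, lam ⟨s, hsl⟩, le_refl _, ?_⟩
      have hstep := hαsucc ⟨s, hsl⟩
      simp only [Fin.val_mk] at *
      rw [← hstep, ← hs, hαl]
  -- the forward map data: the subspaces at breakpoints form an invariant λ-flag
  have key : ∀ V : ℕ → Submodule F (Fin n → F), V ∈ Hess F n (kLam ℓ lam) T →
      IsInvLamFlag F n ℓ lam T (fun t : Fin (ℓ + 1) => V (α t.val)) := by
    intro V hV
    obtain ⟨⟨hV0, hVn, hVle, hVrk⟩, hVT⟩ := hV
    have hVmono : Monotone V := monotone_nat_of_le_succ hVle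
    refine ⟨?_, ?_, ?_, ?_, ?_⟩
    · show V (α (0 : Fin (ℓ + 1)).val) = ⊥
      rw [Fin.val_zero, hα0, hV0]
    · show V (α (Fin.last ℓ).val) = ⊤
      rw [Fin.val_last, hαl, hVn]
    · intro a b hab
      exact hVmono (hαmono hab)
    · intro t
      show Module.finrank F (V (α t.val)) = α t.val
      exact hVrk (α t.val) (hαle t.val (Nat.lt_succ_iff.1 t.2))
    · intro t
      rcases Nat.eq_zero_or_pos t.val with h0 | h1
      · show Submodule.map T (V (α t.val)) ≤ V (α t.val)
        rw [h0, hα0, hV0, Submodule.map_bot]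
      · have htl : t.val ≤ ℓ := Nat.lt_succ_iff.1 t.2
        have hge : 1 ≤ α t.val := by
          have := hαlt h1 htl
          omega
        have hle2 : α t.val ≤ n := hαle _ htl
        have h := hVT (α t.val) hge hle2
        rw [hklam, hidx_psum t.val htl] at h
        exact h
  have key2 : ∀ V : ℕ → Submodule F (Fin n → F), V ∈ Hess F n (kLam ℓ lam) T → ∀ i : Fin ℓ,
      ((fun k : Fin (lam i + 1) => V (α i.val + k.val)) 0 = V (α (i.castSucc).val) ∧
      (fun k : Fin (lam i + 1) => V (α i.val + k.val)) (Fin.last (lam i)) = V (α (i.succ).val) ∧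
      Monotone (fun k : Fin (lam i + 1) => V (α i.val + k.val)) ∧
      ∀ k : Fin (lam i + 1), Module.finrank F (V (α i.val + k.val)) =
        Module.finrank F (V (α (i.castSucc).val)) + k.val) := by
    intro V hV i
    obtain ⟨⟨hV0, hVn, hVle, hVrk⟩, hVT⟩ := hV
    have hVmono : Monotone V := monotone_nat_of_le_succ hVle
    have hcs : (i.castSucc).val = i.val := rfl
    have hsc : (i.succ).val = i.val + 1 := rfl
    have hbound : α i.val + lam i ≤ n := by
      have h1 := hαsucc i
      have h2 := hαle (i.val + 1) i.2
      omega
    refine ⟨?_, ?_, ?_, ?_⟩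
    · show V (α i.val + (0 : Fin (lam i + 1)).val) = V (α (i.castSucc).val)
      rw [Fin.val_zero, Nat.add_zero, hcs]
    · show V (α i.val + (Fin.last (lam i)).val) = V (α (i.succ).val)
      rw [Fin.val_last, hsc, hαsucc i]
    · intro a b hab
      exact hVmono (Nat.add_le_add_left hab _)
    · intro k
      have hkn : α i.val + k.val ≤ n := by have := k.2; omega
      show Module.finrank F (V (α i.val + k.val)) =
        Module.finrank F (V (α (i.castSucc).val)) + k.val
      rw [hVrk (α i.val + k.val) hkn, hcs, hVrk (α i.val) (by omega)]
  set Wset := {W : Fin (ℓ + 1) → Submodule F (Fin n → F) | IsInvLamFlag F n ℓ lam T W}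
    with hWsetdef
  let f : ↥(Hess F n (kLam ℓ lam) T) →
      Σ W : ↥Wset, ∀ i : Fin ℓ, ChainT (W.1 i.castSucc) (W.1 i.succ) (lam i) :=
    fun V => ⟨⟨fun t => V.1 (α t.val), key V.1 V.2⟩,
      fun i => ⟨fun k => V.1 (α i.val + k.val), key2 V.1 V.2 i⟩⟩
  have hinj : Function.Injective f := by
    intro V V' h
    have h2 := congrArg
      (fun x : Σ W : ↥Wset, ∀ i : Fin ℓ, ChainT (W.1 i.castSucc) (W.1 i.succ) (lam i) =>
        fun i : Fin ℓ => ((x.2 i).1 : Fin (lam i + 1) → Submodule F (Fin n → F))) h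
    simp only [f] at h2
    obtain ⟨⟨hV0, hVn, hVle, hVrk⟩, hVT⟩ := V.2
    obtain ⟨⟨hV'0, hV'n, hV'le, hV'rk⟩, hV'T⟩ := V'.2
    apply Subtype.ext
    funext j
    rcases le_or_gt j n with hj | hj
    · obtain ⟨i, k, hk, rfl⟩ := exists_block j hj
      exact congrFun (congrFun h2 i) ⟨k, Nat.lt_succ_of_le hk⟩
    · have e1 : V.1 j = ⊤ := by
        have h3 := monotone_nat_of_le_succ hVle (le_of_lt hj)
        rw [hVn] at h3
        exact le_antisymm le_top h3
      have e2 : V'.1 j = ⊤ := by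
        have h3 := monotone_nat_of_le_succ hV'le (le_of_lt hj)
        rw [hV'n] at h3
        exact le_antisymm le_top h3
      rw [e1, e2]
  have hsurj : Function.Surjective f := by
    rintro ⟨⟨W, hW⟩, c⟩
    have hW' : IsInvLamFlag F n ℓ lam T W := hW
    obtain ⟨hW0, hWl, hWmono, hWrk, hWT⟩ := hW'
    have hWrk' : ∀ t : Fin (ℓ + 1), Module.finrank F (W t) = α t.val := hWrk
    have hc0 : ∀ i : Fin ℓ, (c i).1 0 = W i.castSucc := fun i => (c i).2.1
    have hclast : ∀ i : Fin ℓ, (c i).1 (Fin.last (lam i)) = W i.succ := fun i => (c i).2.2.1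
    have hcmono : ∀ i : Fin ℓ, Monotone (c i).1 := fun i => (c i).2.2.2.1
    have hcrk : ∀ (i : Fin ℓ) (k : Fin (lam i + 1)),
        Module.finrank F ((c i).1 k) = Module.finrank F (W i.castSucc) + k.val :=
      fun i => (c i).2.2.2.2
    -- coherence of overlapping blocks
    have hglue : ∀ (i1 i2 : Fin ℓ) (k1 k2 : ℕ) (h1 : k1 ≤ lam i1) (h2 : k2 ≤ lam i2),
        α i1.val + k1 = α i2.val + k2 →
        (c i1).1 ⟨k1, Nat.lt_succ_of_le h1⟩ = (c i2).1 ⟨k2, Nat.lt_succ_of_le h2⟩ := by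
      have main : ∀ (i1 i2 : Fin ℓ) (k1 k2 : ℕ) (h1 : k1 ≤ lam i1) (h2 : k2 ≤ lam i2),
          i1.val < i2.val → α i1.val + k1 = α i2.val + k2 →
          (c i1).1 ⟨k1, Nat.lt_succ_of_le h1⟩ = (c i2).1 ⟨k2, Nat.lt_succ_of_le h2⟩ := by
        intro i1 i2 k1 k2 h1 h2 hlt heq
        have hs1 := hαsucc i1
        have hmono1 : α (i1.val + 1) ≤ α i2.val := hαmono hlt
        have hk1 : k1 = lam i1 := by omega
        have hk2 : k2 = 0 := by omega
        have hii : i1.val + 1 = i2.val := by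
          by_contra hne
          have hlt2 : i1.val + 1 < i2.val := by omega
          have := hαlt hlt2 (le_of_lt i2.2)
          omega
        have e1 : (c i1).1 ⟨k1, Nat.lt_succ_of_le h1⟩ = W i1.succ := by
          rw [show (⟨k1, Nat.lt_succ_of_le h1⟩ : Fin (lam i1 + 1)) = Fin.last (lam i1) from
            Fin.ext (by simp [hk1])]
          exact hclast i1
        have e2 : (c i2).1 ⟨k2, Nat.lt_succ_of_le h2⟩ = W i2.castSucc := by
          rw [show (⟨k2, Nat.lt_succ_of_le h2⟩ : Fin (lam i2 + 1)) = 0 from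
            Fin.ext (by simp [hk2])]
          exact hc0 i2
        rw [e1, e2]
        exact congrArg W (Fin.ext (by simp [Fin.val_succ, Fin.coe_castSucc]; omega))
      intro i1 i2 k1 k2 h1 h2 heq
      rcases lt_trichotomy i1.val i2.val with h | h | h
      · exact main i1 i2 k1 k2 h1 h2 h heq
      · have hii : i1 = i2 := Fin.ext h
        subst hii
        have hkk : k1 = k2 := by omega
        subst hkk
        rfl
      · exact (main i2 i1 k2 k1 h2 h1 h heq.symm).symm
    -- the glued complete flag
    let bIdx : (j : ℕ) → j ≤ n → Fin ℓ := fun j h => ⟨idx j - 1, by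
      have := hidx_le j h
      omega⟩
    let V : ℕ → Submodule F (Fin n → F) := fun j =>
      if h : j ≤ n then
        (c (bIdx j h)).1 ⟨min (j - α (bIdx j h).val) (lam (bIdx j h)),
          Nat.lt_succ_of_le (min_le_right _ _)⟩
      else ⊤
    -- evaluation of the glued flag inside each block
    have heval : ∀ (i : Fin ℓ) (k : ℕ) (hk : k ≤ lam i),
        V (α i.val + k) = (c i).1 ⟨k, Nat.lt_succ_of_le hk⟩ := by
      intro i k hk
      have hbound : α (i.val + 1) ≤ n := hαle _ i.2
      have hstep := hαsucc i
      have hin : α i.val + k ≤ n := by omega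
      simp only [V]
      rw [dif_pos hin]
      have hbv : (bIdx (α i.val + k) hin).val = idx (α i.val + k) - 1 := rfl
      have hup := hidx_mem (α i.val + k) hin
      refine hglue _ i _ k (min_le_right _ _) hk ?_
      rcases Nat.eq_zero_or_pos (idx (α i.val + k)) with h0 | h1
      · have hg : α (idx (α i.val + k)) = 0 := by rw [h0, hα0]
        rw [hbv, h0]
        have hz : (0 : ℕ) - 1 = 0 := rfl
        rw [hz, hα0]
        omega
      · have hlow := hidx_lt (α i.val + k) (idx (α i.val + k) - 1) (by omega)
        have hstep2 := hαsucc (bIdx (α i.val + k) hin)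
        rw [hbv] at hstep2
        rw [show idx (α i.val + k) - 1 + 1 = idx (α i.val + k) from by omega] at hstep2
        rw [hbv]
        omega
    -- values of the glued flag at the breakpoints
    have hVW : ∀ t : Fin (ℓ + 1), V (α t.val) = W t := by
      intro t
      rcases Nat.lt_or_ge t.val ℓ with h | h
      · have h1 : V (α t.val + 0) = (c ⟨t.val, h⟩).1 ⟨0, Nat.lt_succ_of_le (Nat.zero_le _)⟩ :=
          heval ⟨t.val, h⟩ 0 (Nat.zero_le _)
        rw [Nat.add_zero] at h1
        rw [h1, show (⟨0, Nat.lt_succ_of_le (Nat.zero_le _)⟩ : Fin (lam ⟨t.val, h⟩ + 1)) = 0 from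
          Fin.ext rfl, hc0]
        exact congrArg W (Fin.ext rfl)
      · have htv : t.val = ℓ := by omega
        obtain ⟨s, hs, hsv⟩ : ∃ s, ∃ hs : s < ℓ, ℓ = s + 1 := ⟨ℓ - 1, by omega, by omega⟩
        have h1 : V (α (⟨s, hs⟩ : Fin ℓ).val + lam ⟨s, hs⟩) =
            (c ⟨s, hs⟩).1 ⟨lam ⟨s, hs⟩, Nat.lt_succ_of_le (le_refl _)⟩ :=
          heval ⟨s, hs⟩ (lam ⟨s, hs⟩) (le_refl _)
        rw [show (⟨lam ⟨s, hs⟩, Nat.lt_succ_of_le (le_refl _)⟩ : Fin (lam ⟨s, hs⟩ + 1)) =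
          Fin.last (lam ⟨s, hs⟩) from Fin.ext rfl, hclast] at h1
        have h2 : α t.val = α (⟨s, hs⟩ : Fin ℓ).val + lam ⟨s, hs⟩ := by
          have h3 := hαsucc ⟨s, hs⟩
          calc α t.val = α (s + 1) := by rw [htv, hsv]
            _ = α (⟨s, hs⟩ : Fin ℓ).val + lam ⟨s, hs⟩ := h3
        rw [h2, h1]
        exact congrArg W (Fin.ext (by simp [Fin.val_succ]; omega))
    -- monotonicity of the glued flag
    have hVle : ∀ j, V j ≤ V (j + 1) := by
      intro j
      rcases Nat.lt_or_ge j n with hj | hj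
      · obtain ⟨i, k, hk, rfl⟩ := exists_block' j hj
        have e1 := heval i k (le_of_lt hk)
        have e2 : V (α i.val + k + 1) = (c i).1 ⟨k + 1, Nat.lt_succ_of_le hk⟩ :=
          heval i (k + 1) hk
        rw [e1, e2]
        exact hcmono i (by simp [Fin.mk_le_mk])
      · have e2 : V (j + 1) = ⊤ := by
          simp only [V]
          rw [dif_neg (by omega)]
        rw [e2]
        exact le_top
    have hVmono : Monotone V := monotone_nat_of_le_succ hVle
    have hVmem : V ∈ Hess F n (kLam ℓ lam) T := by
      refine ⟨⟨?_, ?_, hVle, ?_⟩, ?_⟩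
      · have h := hVW 0
        rw [Fin.val_zero, hα0] at h
        rw [h, hW0]
      · have h := hVW (Fin.last ℓ)
        rw [Fin.val_last, hαl] at h
        rw [h, hWl]
      · intro j hj
        obtain ⟨i, k, hk, rfl⟩ := exists_block j hj
        rw [heval i k hk]
        have h1 := hcrk i ⟨k, Nat.lt_succ_of_le hk⟩
        have h2 := hWrk' i.castSucc
        have h3 : (i.castSucc).val = i.val := rfl
        rw [h1, h2, h3]
      · intro j hj1 hjn
        have e : V (α (idx j)) = W ⟨idx j, Nat.lt_succ_of_le (hidx_le j hjn)⟩ :=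
          hVW ⟨idx j, Nat.lt_succ_of_le (hidx_le j hjn)⟩
        rw [hklam, e]
        refine le_trans (Submodule.map_mono ?_) (hWT _)
        rw [← e]
        exact hVmono (hidx_mem j hjn)
    refine ⟨⟨V, hVmem⟩, ?_⟩
    simp only [f]
    refine sig_ext _ _ (Subtype.ext (funext fun t => hVW t)) (fun i => ?_)
    funext k
    exact heval i k.val (Nat.lt_succ_iff.mp k.2)
  -- count both sides
  have hcount := Nat.card_congr (Equiv.ofBijective f ⟨hinj, hsurj⟩)
  rw [← Nat.card_coe_set_eq, hcount]
  letI : Fintype ↥Wset := Fintype.ofFinite _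
  rw [natCard_sigma]
  have hfib : ∀ W : ↥Wset,
      Nat.card (∀ i : Fin ℓ, ChainT (W.1 i.castSucc) (W.1 i.succ) (lam i)) =
        ∏ i, qFact (Fintype.card F) (lam i) := by
    intro W
    have hW' : IsInvLamFlag F n ℓ lam T W.1 := W.2
    obtain ⟨hW0, hWl, hWmono, hWrk, hWT⟩ := hW'
    have hWrk' : ∀ t : Fin (ℓ + 1), Module.finrank F (W.1 t) = α t.val := hWrk
    rw [Nat.card_pi]
    refine Finset.prod_congr rfl fun i _ => ?_
    apply card_chain
    · exact hWmono (Fin.castSucc_le_succ i)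
    · have h1 := hWrk' i.succ
      have h2 := hWrk' i.castSucc
      have h3 := hαsucc i
      have hc : (i.castSucc).val = i.val := rfl
      have hsc : (i.succ).val = i.val + 1 := rfl
      rw [h1, h2, hc, hsc, h3]
  rw [finsum_congr hfib, finsum_eq_sum_of_fintype, Finset.sum_const, Finset.card_univ,
    smul_eq_mul, ← Nat.card_eq_fintype_card, Nat.card_coe_set_eq, mul_comm]
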